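/- arXiv:2410.08904 — 2 statements merged into one kernel-verified Lean document; each statement's English description precedes it below -/
import Mathlib

section
/- Interior lattice resolvent sum bound (key estimate in the proof of Lemma 5.2): There exists a constant C > 0 such that for every k_F ∈ (0,1] and every L ≥ 1/k_F, one has (1/L³) ∑_{k ∈ Λ*_L, |k| ≤ k_F − k_F^{3/2}} 1/(k_F² − |k|²) ≤ C k_F^{1/2}. (With ρ := k_F³ this is the bound C ρ^{1/6} used in the paper.) -/
/-!
Interior lattice resolvent sum bound (key estimate in the proof of Lemma 5.2):
there is `C > 0` such that for every `k_F ∈ (0,1]` and every `L ≥ 1/k_F`,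
`(1/L³) ∑_{k ∈ Λ*_L, |k| ≤ k_F − k_F^{3/2}} 1/(k_F² − |k|²) ≤ C k_F^{1/2}`,
where `Λ*_L = (2π/L)ℤ³`.
-/

noncomputable section

open Real

abbrev E3 : Type := EuclideanSpace ℝ (Fin 3)

/-- The momentum lattice point `(2π/L)·n` of `Λ*_L`, for `n ∈ ℤ³`. -/
def momVec (L : ℝ) (n : Fin 3 → ℤ) : E3 :=
  ∑ j : Fin 3, (2 * π / L * (n j : ℝ)) • EuclideanSpace.single j (1 : ℝ)

/-- The Euclidean norm `|k|` of the lattice point `(2π/L)·n`. -/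
def knorm (L : ℝ) (n : Fin 3 → ℤ) : ℝ := ‖momVec L n‖

lemma momVec_apply (L : ℝ) (n : Fin 3 → ℤ) (i : Fin 3) :
    momVec L n i = 2 * π / L * (n i : ℝ) := by
  calc momVec L n i
      = ∑ j : Fin 3, ((2 * π / L * (n j : ℝ)) • EuclideanSpace.single j (1 : ℝ)) i :=
        by rw [momVec, WithLp.ofLp_sum]; exact Finset.sum_apply i Finset.univ _
    _ = 2 * π / L * (n i : ℝ) := by
        simp [EuclideanSpace.single_apply, PiLp.smul_apply]

lemma abs_le_knorm (L : ℝ) (n : Fin 3 → ℤ) (i : Fin 3) :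
    |2 * π / L * (n i : ℝ)| ≤ knorm L n := by
  rw [knorm, EuclideanSpace.norm_eq, ← Real.sqrt_sq_eq_abs]
  apply Real.sqrt_le_sqrt
  calc (2 * π / L * (n i : ℝ)) ^ 2 = ‖momVec L n i‖ ^ 2 := by
        rw [momVec_apply, Real.norm_eq_abs, sq_abs]
    _ ≤ ∑ j, ‖momVec L n j‖ ^ 2 :=
        Finset.single_le_sum (f := fun j => ‖momVec L n j‖ ^ 2)
          (fun j _ => by positivity) (Finset.mem_univ i)

theorem interior_lattice_resolvent_sum_bound :
    ∃ C : ℝ, 0 < C ∧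
      ∀ kF : ℝ, kF ∈ Set.Ioc (0 : ℝ) 1 → ∀ L : ℝ, 1 / kF ≤ L →
        (1 / L ^ 3) *
            ∑' n : Fin 3 → ℤ,
              (if knorm L n ≤ kF - kF ^ ((3 : ℝ) / 2) then
                1 / (kF ^ 2 - knorm L n ^ 2)
              else 0)
          ≤ C * kF ^ ((1 : ℝ) / 2) := by
  refine ⟨125, by norm_num, ?_⟩
  rintro kF ⟨hkF, hkF1⟩ L hL
  have hLpos : 0 < L := lt_of_lt_of_le (by positivity) hL
  have hkL : 1 ≤ kF * L := by
    rw [div_le_iff₀ hkF] at hL; nlinarith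
  set a := kF ^ ((3:ℝ)/2) with ha_def
  set b := kF ^ ((5:ℝ)/2) with hb_def
  have hb : 0 < b := rpow_pos_of_pos hkF _
  have ha : 0 < a := rpow_pos_of_pos hkF _
  have ha_le : a ≤ kF := by
    calc a ≤ kF ^ (1:ℝ) := rpow_le_rpow_of_exponent_ge hkF hkF1 (by norm_num)
      _ = kF := rpow_one kF
  have h3 : kF ^ (3:ℝ) ≤ b := rpow_le_rpow_of_exponent_ge hkF hkF1 (by norm_num)
  have haa : a * a = kF ^ (3:ℝ) := by rw [ha_def, ← rpow_add hkF]; norm_num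
  have hka : kF * a = b := by
    rw [ha_def, hb_def]; nth_rewrite 1 [← rpow_one kF]; rw [← rpow_add hkF]; norm_num
  have hbh : b * kF ^ ((1:ℝ)/2) = kF ^ (3:ℝ) := by
    rw [hb_def, ← rpow_add hkF]; norm_num
  have hden : ∀ n, knorm L n ≤ kF - a → b ≤ kF ^ 2 - knorm L n ^ 2 := by
    intro n h
    have h0 : 0 ≤ knorm L n := norm_nonneg _
    have h1 : knorm L n ^ 2 ≤ (kF - a) ^ 2 := by nlinarith
    nlinarith
  set N : ℤ := ⌈kF * L⌉ with hN_def
  have hNge : kF * L ≤ (N : ℝ) := Int.le_ceil _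
  have hN1 : (1:ℝ) ≤ (N:ℝ) := le_trans hkL hNge
  have hNle : (N:ℝ) ≤ kF * L + 1 := le_of_lt (Int.ceil_lt_add_one _)
  set S : Finset (Fin 3 → ℤ) := Fintype.piFinset (fun _ => Finset.Icc (-N) N) with hS_def
  have hmem : ∀ n : Fin 3 → ℤ, knorm L n ≤ kF - a → n ∈ S := by
    intro n h
    rw [hS_def, Fintype.mem_piFinset]
    intro i
    rw [Finset.mem_Icc, ← abs_le]
    have hcomp := abs_le_knorm L n i
    have hπ : 3 < π := pi_gt_three
    have h2 : |2 * π / L * (n i : ℝ)| = 2 * π / L * |(n i : ℝ)| := by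
      rw [abs_mul, abs_of_pos (by positivity)]
    have h5 : 2 * π / L * |(n i : ℝ)| ≤ kF := by
      rw [← h2]; linarith
    have h6 : |(n i : ℝ)| ≤ kF * L := by
      rw [div_mul_eq_mul_div, div_le_iff₀ hLpos] at h5
      nlinarith [abs_nonneg ((n i : ℝ))]
    have h7 : (|n i| : ℝ) ≤ (N : ℝ) := by
      push_cast
      exact le_trans h6 hNge
    exact_mod_cast h7
  have hf0 : ∀ n ∉ S,
      (if knorm L n ≤ kF - a then 1 / (kF ^ 2 - knorm L n ^ 2) else 0) = 0 := by
    intro n hn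
    rw [if_neg]
    intro h
    exact hn (hmem n h)
  rw [tsum_eq_sum hf0]
  have hfle : ∀ n ∈ S,
      (if knorm L n ≤ kF - a then 1 / (kF ^ 2 - knorm L n ^ 2) else 0) ≤ 1 / b := by
    intro n _
    split
    · next h => exact one_div_le_one_div_of_le hb (hden n h)
    · positivity
  have hsum : ∑ n ∈ S, (if knorm L n ≤ kF - a then 1 / (kF ^ 2 - knorm L n ^ 2) else 0)
      ≤ (S.card : ℝ) * (1 / b) := by
    calc _ ≤ ∑ _n ∈ S, 1 / b := Finset.sum_le_sum hfle
      _ = (S.card : ℝ) * (1 / b) := by rw [Finset.sum_const, nsmul_eq_mul]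
  have hN1' : (1:ℤ) ≤ N := by exact_mod_cast hN1
  have hcardnat : S.card = (2 * N + 1).toNat ^ 3 := by
    rw [hS_def, Fintype.card_piFinset, Finset.prod_const, Finset.card_univ, Fintype.card_fin,
      Int.card_Icc]
    congr 2
    omega
  have hcardeq : (S.card : ℝ) = ((2 * N + 1 : ℤ) : ℝ) ^ 3 := by
    rw [hcardnat]
    have hz : ((2 * N + 1).toNat : ℤ) = 2 * N + 1 := Int.toNat_of_nonneg (by omega)
    have hz' : (((2 * N + 1).toNat : ℕ) : ℝ) = ((2 * N + 1 : ℤ) : ℝ) := by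
      exact_mod_cast congrArg (fun z : ℤ => (z : ℝ)) hz
    rw [Nat.cast_pow, hz']
  have hcard : (S.card : ℝ) ≤ 125 * (kF * L) ^ 3 := by
    rw [hcardeq]
    have h2N : ((2 * N + 1 : ℤ) : ℝ) ≤ 5 * (kF * L) := by
      push_cast; nlinarith
    have h2Npos : (0:ℝ) ≤ ((2 * N + 1 : ℤ) : ℝ) := by push_cast; nlinarith
    calc ((2 * N + 1 : ℤ) : ℝ) ^ 3 ≤ (5 * (kF * L)) ^ 3 :=
          pow_le_pow_left₀ h2Npos h2N 3
      _ = 125 * (kF * L) ^ 3 := by ring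
  have hkF3 : kF ^ (3:ℕ) = b * kF ^ ((1:ℝ)/2) := by
    rw [hbh, ← rpow_natCast kF 3]; norm_num
  calc (1 / L ^ 3) * ∑ n ∈ S, (if knorm L n ≤ kF - a then 1 / (kF ^ 2 - knorm L n ^ 2) else 0)
      ≤ (1 / L ^ 3) * ((S.card : ℝ) * (1 / b)) := by
        apply mul_le_mul_of_nonneg_left hsum (by positivity)
    _ ≤ (1 / L ^ 3) * (125 * (kF * L) ^ 3 * (1 / b)) := by
        apply mul_le_mul_of_nonneg_left _ (by positivity)
        exact mul_le_mul_of_nonneg_right hcard (by positivity)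
    _ = 125 * kF ^ ((1:ℝ)/2) := by
        rw [mul_pow, hkF3]
        field_simp
end
end

section
/- Refined interior lattice resolvent sum bound (Section 6): For every δ ∈ (0, 1/8] there exists a constant C > 0 such that for every k_F ∈ (0,1] there is L₀ > 0 with: for all L ≥ L₀, (1/L³) ∑_{k ∈ Λ*_L, |k| ≤ k_F − k_F^{3/2}} 1/(k_F² − |k|²) ≤ C k_F^{1/2 + 3δ}. (With ρ := k_F³ this is the bound C ρ^{1/6 + δ} used in the paper.) -/
/-!
Refined interior lattice resolvent sum bound (Section 6): for every `δ ∈ (0,1/8]`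
there is `C > 0` such that for every `k_F ∈ (0,1]` there is `L₀ > 0` with: for all
`L ≥ L₀`, `(1/L³) ∑_{k ∈ Λ*_L, |k| ≤ k_F − k_F^{3/2}} 1/(k_F² − |k|²)
≤ C k_F^{1/2 + 3δ}`, where `Λ*_L = (2π/L)ℤ³`.
-/

noncomputable section

open Real

lemma knorm_sq (L : ℝ) (n : Fin 3 → ℤ) :
    knorm L n ^ 2 = (2*π/L)^2 * (((n 0 : ℝ))^2 + ((n 1 : ℝ))^2 + ((n 2 : ℝ))^2) := by
  rw [knorm, EuclideanSpace.norm_eq, Real.sq_sqrt (by positivity)]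
  simp only [momVec_apply, Real.norm_eq_abs, sq_abs]
  rw [Fin.sum_univ_three]
  ring

lemma knorm_nonneg (L : ℝ) (n : Fin 3 → ℤ) : 0 ≤ knorm L n := norm_nonneg _

def e3 : ℤ × ℤ × ℤ ≃ (Fin 3 → ℤ) where
  toFun p := ![p.1, p.2.1, p.2.2]
  invFun n := (n 0, n 1, n 2)
  left_inv p := by simp
  right_inv n := by
    funext i
    fin_cases i <;> simp

lemma knorm_sq_e3 (L : ℝ) (x y z : ℤ) :
    knorm L (e3 (x,y,z)) ^ 2 = (2*π/L)^2 * ((x:ℝ)^2 + (y:ℝ)^2 + (z:ℝ)^2) := by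
  rw [knorm_sq]
  simp [e3]

lemma lemA_core (h a s : ℝ) (hh : 0 < h) (hs : 0 ≤ s) (hsa : s < a) (M : ℕ) (hM : h * M ≤ s) :
    ∑ j ∈ Finset.range (M+1), 1/(a - h*j) ≤ 1/(a-s) + 1/h * (Real.log a - Real.log (a-s)) := by
  have ha : 0 < a := lt_of_le_of_lt hs hsa
  have has : 0 < a - s := by linarith
  rw [Finset.sum_range_succ]
  have hmono : ∀ j : ℕ, j ≤ M → 0 < a - h*j := by
    intro j hj
    have : h * j ≤ h * M := by
      apply mul_le_mul_of_nonneg_left _ hh.le; exact_mod_cast hj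
    linarith
  have hstep : ∀ j ∈ Finset.range M, 1/(a - h*j) ≤
      (1/h * Real.log (a - h*j) - 1/h * Real.log (a - h*(j+1))) := by
    intro j hj
    simp only [Finset.mem_range] at hj
    have h1 : 0 < a - h*(j+1) := by
      have := hmono (j+1) hj; push_cast at this ⊢; linarith
    have h0 : 0 < a - h*j := hmono j hj.le
    have hx : Real.log ((a - h*(j+1))/(a - h*j)) ≤ (a - h*(j+1))/(a - h*j) - 1 :=
      Real.log_le_sub_one_of_pos (by positivity)
    rw [Real.log_div h1.ne' h0.ne'] at hx
    have hx2 : (a - h*(j+1))/(a - h*j) - 1 = -(h/(a - h*j)) := by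
      field_simp; ring
    rw [hx2] at hx
    have hx3 : h/(a-h*j) ≤ Real.log (a-h*j) - Real.log (a-h*(j+1)) := by linarith
    calc 1/(a-h*j) = (1/h) * (h/(a-h*j)) := by field_simp
      _ ≤ (1/h) * (Real.log (a-h*j) - Real.log (a-h*(j+1))) :=
          mul_le_mul_of_nonneg_left hx3 (by positivity)
      _ = 1/h * Real.log (a - h*j) - 1/h * Real.log (a - h*(j+1)) := by ring
  have htel : ∑ j ∈ Finset.range M, (1/h * Real.log (a - h*j) - 1/h * Real.log (a - h*(j+1)))
      = 1/h * Real.log (a - h*0) - 1/h * Real.log (a - h*M) := by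
    have := Finset.sum_range_sub' (fun j : ℕ => 1/h * Real.log (a - h*j)) M
    push_cast at this ⊢
    convert this using 2 <;> push_cast <;> ring_nf
  have hsum : ∑ j ∈ Finset.range M, 1/(a - h*j)
      ≤ 1/h * Real.log a - 1/h * Real.log (a - h*M) := by
    calc ∑ j ∈ Finset.range M, 1/(a - h*j)
        ≤ ∑ j ∈ Finset.range M, (1/h * Real.log (a - h*j) - 1/h * Real.log (a - h*(j+1))) :=
          Finset.sum_le_sum hstep
      _ = 1/h * Real.log (a - h*0) - 1/h * Real.log (a - h*M) := htel
      _ = 1/h * Real.log a - 1/h * Real.log (a - h*M) := by norm_num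
  have hlog : Real.log (a - s) ≤ Real.log (a - h*M) := by
    apply Real.log_le_log has (by linarith)
  have htop : 1/(a - h*M) ≤ 1/(a-s) := by
    apply one_div_le_one_div_of_le has (by linarith)
  have h1h : (0:ℝ) ≤ 1/h := by positivity
  nlinarith [mul_le_mul_of_nonneg_left hlog h1h]

lemma lemB_core (h a s : ℝ) (hh : 0 < h) (hs : 0 ≤ s) (hsa : s < a) (M : ℕ) (hM : h * M ≤ s) :
    ∑ j ∈ Finset.range (M+1), 1/Real.sqrt (a - h*j) ≤ 1/Real.sqrt (a-s) + 2/h * Real.sqrt a := by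
  have ha : 0 < a := lt_of_le_of_lt hs hsa
  have has : 0 < a - s := by linarith
  rw [Finset.sum_range_succ]
  have hmono : ∀ j : ℕ, j ≤ M → 0 < a - h*j := by
    intro j hj
    have : h * j ≤ h * M := by
      apply mul_le_mul_of_nonneg_left _ hh.le; exact_mod_cast hj
    linarith
  have hstep : ∀ j ∈ Finset.range M, 1/Real.sqrt (a - h*j) ≤
      (2/h * Real.sqrt (a - h*j) - 2/h * Real.sqrt (a - h*(j+1))) := by
    intro j hj
    simp only [Finset.mem_range] at hj
    have h1 : 0 < a - h*(j+1) := by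
      have := hmono (j+1) hj; push_cast at this ⊢; linarith
    have h0 : 0 < a - h*j := hmono j hj.le
    have s0 := Real.sqrt_pos.mpr h0
    have s1 := Real.sqrt_pos.mpr h1
    have q0 : Real.sqrt (a - h*j) ^ 2 = a - h*j := Real.sq_sqrt h0.le
    have q1 : Real.sqrt (a - h*(j+1)) ^ 2 = a - h*(j+1) := Real.sq_sqrt h1.le
    -- key: h/(2 √(a-hj)) ≤ √(a-hj) - √(a-h(j+1))
    have key : h ≤ 2 * Real.sqrt (a - h*j) * (Real.sqrt (a - h*j) - Real.sqrt (a - h*(j+1))) := by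
      nlinarith [sq_nonneg (Real.sqrt (a - h*j) - Real.sqrt (a - h*(j+1))), s0, s1]
    rw [div_le_iff₀ s0] -- 1 ≤ (2/h √u - 2/h √v) * √u
    calc (1:ℝ) = (1/h) * h := by field_simp
      _ ≤ (1/h) * (2 * Real.sqrt (a - h*j) * (Real.sqrt (a - h*j) - Real.sqrt (a - h*(j+1)))) :=
          mul_le_mul_of_nonneg_left key (by positivity)
      _ = (2/h * Real.sqrt (a - h*j) - 2/h * Real.sqrt (a - h*(j+1))) * Real.sqrt (a - h*j) := by
          field_simp
  have htel : ∑ j ∈ Finset.range M, (2/h * Real.sqrt (a - h*j) - 2/h * Real.sqrt (a - h*(j+1)))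
      = 2/h * Real.sqrt (a - h*0) - 2/h * Real.sqrt (a - h*M) := by
    have := Finset.sum_range_sub' (fun j : ℕ => 2/h * Real.sqrt (a - h*j)) M
    convert this using 2 <;> push_cast <;> ring_nf
  have hsum : ∑ j ∈ Finset.range M, 1/Real.sqrt (a - h*j) ≤ 2/h * Real.sqrt a := by
    calc ∑ j ∈ Finset.range M, 1/Real.sqrt (a - h*j)
        ≤ ∑ j ∈ Finset.range M, (2/h * Real.sqrt (a - h*j) - 2/h * Real.sqrt (a - h*(j+1))) :=
          Finset.sum_le_sum hstep
      _ = 2/h * Real.sqrt (a - h*0) - 2/h * Real.sqrt (a - h*M) := htel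
      _ ≤ 2/h * Real.sqrt a := by
          have : (0:ℝ) ≤ 2/h * Real.sqrt (a - h*M) := by positivity
          norm_num; linarith
  have htop : 1/Real.sqrt (a - h*M) ≤ 1/Real.sqrt (a-s) := by
    apply one_div_le_one_div_of_le (Real.sqrt_pos.mpr has)
    exact Real.sqrt_le_sqrt (by linarith)
  linarith

lemma sum_even_reduce (f : ℤ → ℝ) (hf0 : ∀ z, 0 ≤ f z) (hev : ∀ z, f (-z) = f z) (N : ℤ) :
    ∑ z ∈ Finset.Icc (-N) N, f z ≤ 2 * ∑ z ∈ Finset.Icc 0 N, f z := by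
  rcases lt_or_ge N 0 with hN | hN
  · rw [Finset.Icc_eq_empty (by omega), Finset.Icc_eq_empty (by omega)]
    simp
  · have hsplit : Finset.Icc (-N) N = Finset.Icc (-N) (-1) ∪ Finset.Icc 0 N := by
      ext z; simp only [Finset.mem_Icc, Finset.mem_union]; omega
    have hdisj : Disjoint (Finset.Icc (-N) (-1)) (Finset.Icc (0:ℤ) N) := by
      rw [Finset.disjoint_left]; intro z h1 h2
      simp only [Finset.mem_Icc] at h1 h2; omega
    rw [hsplit, Finset.sum_union hdisj]
    have hneg : ∑ z ∈ Finset.Icc (-N) (-1), f z = ∑ z ∈ Finset.Icc (1:ℤ) N, f z := by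
      refine Finset.sum_nbij' (fun z => -z) (fun z => -z) ?_ ?_ ?_ ?_ ?_
      · intro z hz; simp only [Finset.mem_Icc] at *; omega
      · intro z hz; simp only [Finset.mem_Icc] at *; omega
      · intro z hz; simp
      · intro z hz; simp
      · intro z hz; exact (hev z).symm
    have hsub : ∑ z ∈ Finset.Icc (1:ℤ) N, f z ≤ ∑ z ∈ Finset.Icc (0:ℤ) N, f z := by
      apply Finset.sum_le_sum_of_subset_of_nonneg
      · intro z hz; simp only [Finset.mem_Icc] at *; omega
      · intro z _ _; exact hf0 z
    rw [hneg]; linarith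

lemma sum_cap_range (f : ℤ → ℝ) (hf0 : ∀ z, 0 ≤ f z) (M : ℕ)
    (hvan : ∀ z : ℤ, (M:ℤ) < z → f z = 0) (N : ℤ) :
    ∑ z ∈ Finset.Icc 0 N, f z ≤ ∑ j ∈ Finset.range (M+1), f j := by
  have h1 : ∑ z ∈ Finset.Icc 0 N, f z ≤ ∑ z ∈ Finset.Icc 0 (max N M), f z := by
    apply Finset.sum_le_sum_of_subset_of_nonneg
    · apply Finset.Icc_subset_Icc le_rfl (le_max_left _ _)
    · intro z _ _; exact hf0 z
  have h2 : ∑ z ∈ Finset.Icc 0 (max N (M:ℤ)), f z = ∑ z ∈ Finset.Icc 0 (M:ℤ), f z := by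
    symm
    apply Finset.sum_subset
    · apply Finset.Icc_subset_Icc le_rfl (le_max_right _ _)
    · intro z hz hz2
      simp only [Finset.mem_Icc] at hz hz2
      exact hvan z (by omega)
  have h3 : ∑ z ∈ Finset.Icc (0:ℤ) (M:ℤ), f z = ∑ j ∈ Finset.range (M+1), f j := by
    rw [show Finset.Icc (0:ℤ) (M:ℤ) = (Finset.range (M+1)).image (Nat.cast : ℕ → ℤ) by
      ext z; simp only [Finset.mem_Icc, Finset.mem_image, Finset.mem_range]
      constructor
      · intro hz; exact ⟨z.toNat, by omega, by omega⟩
      · rintro ⟨j, hj, rfl⟩; omega]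
    rw [Finset.sum_image (by intro x _ y _ hxy; exact_mod_cast hxy)]
  rw [h2, h3] at h1
  exact h1

section helpers
variable (h a s : ℝ)

lemma cond_iff (hh : 0 < h) (hs : 0 ≤ s) (z : ℤ) (hz : 0 ≤ z) :
    (h^2*(z:ℝ)^2 ≤ s^2 ↔ h*(z:ℝ) ≤ s) := by
  have hz' : (0:ℝ) ≤ (z:ℝ) := by exact_mod_cast hz
  constructor
  · intro hc
    nlinarith [mul_nonneg hh.le hz']
  · intro hc
    nlinarith [mul_nonneg hh.le hz']

lemma vanish_above (hh : 0 < h) (hs : 0 ≤ s) (z : ℤ) (hz : ((⌊s/h⌋₊ : ℤ) : ℤ) < z) :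
    ¬ (h^2*(z:ℝ)^2 ≤ s^2) := by
  have h1 : s/h < (⌊s/h⌋₊ : ℝ) + 1 := Nat.lt_floor_add_one _
  have hz' : ((⌊s/h⌋₊:ℝ) + 1) ≤ (z:ℝ) := by exact_mod_cast hz
  have h2 : s < h * (z:ℝ) := by
    rw [show s = h * (s/h) by field_simp]
    apply mul_lt_mul_of_pos_left (lt_of_lt_of_le h1 hz') hh
  intro hc
  nlinarith [h2, hs]
end helpers

lemma lemA (h a s : ℝ) (hh : 0 < h) (hs : 0 ≤ s) (hsa : s < a) (N : ℤ) :
    ∑ z ∈ Finset.Icc (-N) N, (if h^2*(z:ℝ)^2 ≤ s^2 then 1/(a^2 - h^2*(z:ℝ)^2) else 0)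
      ≤ 2/a * (1/(a-s) + 1/h * Real.log (a/(a-s))) := by
  have ha : 0 < a := lt_of_le_of_lt hs hsa
  have has : 0 < a - s := by linarith
  set f : ℤ → ℝ := fun z => (if h^2*(z:ℝ)^2 ≤ s^2 then 1/(a^2 - h^2*(z:ℝ)^2) else 0) with hf
  have hpos : ∀ z : ℤ, h^2*(z:ℝ)^2 ≤ s^2 → 0 < a^2 - h^2*(z:ℝ)^2 := by
    intro z hc; nlinarith
  have hf0 : ∀ z, 0 ≤ f z := by
    intro z; simp only [hf]
    split_ifs with hc
    · have := hpos z hc; positivity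
    · exact le_rfl
  have hev : ∀ z, f (-z) = f z := by
    intro z; simp only [hf]; push_cast; ring_nf
  set M : ℕ := ⌊s/h⌋₊ with hM
  have hvan : ∀ z : ℤ, (M:ℤ) < z → f z = 0 := by
    intro z hz; simp only [hf]
    rw [if_neg (vanish_above h s hh hs z hz)]
  have step1 := sum_even_reduce f hf0 hev N
  have step2 := sum_cap_range f hf0 M hvan N
  have hMs : h * M ≤ s := by
    have := Nat.floor_le (show (0:ℝ) ≤ s/h by positivity)
    rw [hM]
    calc h * (⌊s/h⌋₊:ℝ) ≤ h * (s/h) := mul_le_mul_of_nonneg_left this hh.le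
      _ = s := by field_simp
  have hptwise : ∀ j ∈ Finset.range (M+1), f j ≤ (1/a) * (1/(a - h*j)) := by
    intro j hj
    simp only [Finset.mem_range] at hj
    have hjM : (j:ℝ) ≤ (M:ℝ) := by exact_mod_cast Nat.lt_succ_iff.mp hj
    have hjs : h * (j:ℝ) ≤ s := by
      calc h * (j:ℝ) ≤ h * (M:ℝ) := mul_le_mul_of_nonneg_left hjM hh.le
        _ ≤ s := hMs
    have hc : h^2*((j:ℤ):ℝ)^2 ≤ s^2 := by
      push_cast
      nlinarith [mul_nonneg hh.le (show (0:ℝ) ≤ (j:ℝ) by positivity)]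
    simp only [hf]
    rw [if_pos hc]
    push_cast
    have hd1 : 0 < a - h*(j:ℝ) := by linarith
    have hd2 : 0 < a^2 - h^2*(j:ℝ)^2 := by push_cast at hc ⊢; nlinarith
    rw [one_div, one_div, one_div, ← mul_inv]
    apply inv_anti₀ (by positivity)
    nlinarith [mul_nonneg hh.le (show (0:ℝ) ≤ (j:ℝ) by positivity)]
  have hchain : ∑ j ∈ Finset.range (M+1), f j ≤ (1/a) * ∑ j ∈ Finset.range (M+1), 1/(a - h*j) := by
    rw [Finset.mul_sum]
    apply Finset.sum_le_sum
    intro j hj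
    exact hptwise j hj
  have hcore := lemA_core h a s hh hs hsa M hMs
  have hlogdiv : Real.log (a/(a-s)) = Real.log a - Real.log (a-s) :=
    Real.log_div ha.ne' has.ne'
  calc ∑ z ∈ Finset.Icc (-N) N, f z ≤ 2 * ∑ z ∈ Finset.Icc 0 N, f z := step1
    _ ≤ 2 * ∑ j ∈ Finset.range (M+1), f j := by linarith
    _ ≤ 2 * ((1/a) * ∑ j ∈ Finset.range (M+1), 1/(a - h*j)) := by linarith
    _ ≤ 2 * ((1/a) * (1/(a-s) + 1/h * (Real.log a - Real.log (a-s)))) := by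
        have h1a : (0:ℝ) ≤ 1/a := by positivity
        nlinarith [mul_le_mul_of_nonneg_left hcore h1a]
    _ = 2/a * (1/(a-s) + 1/h * Real.log (a/(a-s))) := by rw [hlogdiv]; ring

lemma lemB (h a s : ℝ) (hh : 0 < h) (hs : 0 ≤ s) (hsa : s < a) (N : ℤ) :
    ∑ z ∈ Finset.Icc (-N) N, (if h^2*(z:ℝ)^2 ≤ s^2 then 1/Real.sqrt (a^2 - h^2*(z:ℝ)^2) else 0)
      ≤ 2/(Real.sqrt a * Real.sqrt (a-s)) + 4/h := by
  have ha : 0 < a := lt_of_le_of_lt hs hsa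
  have has : 0 < a - s := by linarith
  set f : ℤ → ℝ := fun z => (if h^2*(z:ℝ)^2 ≤ s^2 then 1/Real.sqrt (a^2 - h^2*(z:ℝ)^2) else 0)
    with hf
  have hf0 : ∀ z, 0 ≤ f z := by
    intro z; simp only [hf]
    split_ifs with hc
    · positivity
    · exact le_rfl
  have hev : ∀ z, f (-z) = f z := by
    intro z; simp only [hf]; push_cast; ring_nf
  set M : ℕ := ⌊s/h⌋₊ with hM
  have hvan : ∀ z : ℤ, (M:ℤ) < z → f z = 0 := by
    intro z hz; simp only [hf]
    rw [if_neg (vanish_above h s hh hs z hz)]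
  have step1 := sum_even_reduce f hf0 hev N
  have step2 := sum_cap_range f hf0 M hvan N
  have hMs : h * M ≤ s := by
    have := Nat.floor_le (show (0:ℝ) ≤ s/h by positivity)
    rw [hM]
    calc h * (⌊s/h⌋₊:ℝ) ≤ h * (s/h) := mul_le_mul_of_nonneg_left this hh.le
      _ = s := by field_simp
  have hptwise : ∀ j ∈ Finset.range (M+1), f j ≤ (1/Real.sqrt a) * (1/Real.sqrt (a - h*j)) := by
    intro j hj
    simp only [Finset.mem_range] at hj
    have hjM : (j:ℝ) ≤ (M:ℝ) := by exact_mod_cast Nat.lt_succ_iff.mp hj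
    have hjs : h * (j:ℝ) ≤ s := by
      calc h * (j:ℝ) ≤ h * (M:ℝ) := mul_le_mul_of_nonneg_left hjM hh.le
        _ ≤ s := hMs
    have hj0 : (0:ℝ) ≤ h * (j:ℝ) := by positivity
    have hc : h^2*((j:ℤ):ℝ)^2 ≤ s^2 := by push_cast; nlinarith
    simp only [hf]
    rw [if_pos hc]
    push_cast
    have hd1 : 0 < a - h*(j:ℝ) := by linarith
    have hkey : Real.sqrt a * Real.sqrt (a - h*(j:ℝ)) ≤ Real.sqrt (a^2 - h^2*(j:ℝ)^2) := by
      rw [← Real.sqrt_mul ha.le]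
      apply Real.sqrt_le_sqrt
      nlinarith
    rw [one_div, one_div, one_div, ← mul_inv]
    apply inv_anti₀ (by positivity) hkey
  have hchain : ∑ j ∈ Finset.range (M+1), f j
      ≤ (1/Real.sqrt a) * ∑ j ∈ Finset.range (M+1), 1/Real.sqrt (a - h*j) := by
    rw [Finset.mul_sum]
    exact Finset.sum_le_sum hptwise
  have hcore := lemB_core h a s hh hs hsa M hMs
  have hsqa : 0 < Real.sqrt a := Real.sqrt_pos.mpr ha
  have hsqas : 0 < Real.sqrt (a-s) := Real.sqrt_pos.mpr has
  have hfin : 2 * ((1/Real.sqrt a) * (1/Real.sqrt (a-s) + 2/h * Real.sqrt a))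
      = 2/(Real.sqrt a * Real.sqrt (a-s)) + 4/h := by
    field_simp
    ring
  calc ∑ z ∈ Finset.Icc (-N) N, f z ≤ 2 * ∑ z ∈ Finset.Icc 0 N, f z := step1
    _ ≤ 2 * ∑ j ∈ Finset.range (M+1), f j := by linarith
    _ ≤ 2 * ((1/Real.sqrt a) * ∑ j ∈ Finset.range (M+1), 1/Real.sqrt (a - h*j)) := by linarith
    _ ≤ 2 * ((1/Real.sqrt a) * (1/Real.sqrt (a-s) + 2/h * Real.sqrt a)) := by
        have h1a : (0:ℝ) ≤ 1/Real.sqrt a := by positivity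
        nlinarith [mul_le_mul_of_nonneg_left hcore h1a]
    _ = 2/(Real.sqrt a * Real.sqrt (a-s)) + 4/h := hfin

lemma lemC (h s c : ℝ) (hh : 0 < h) (hs : 0 ≤ s) (hc : 0 ≤ c) (N : ℤ) :
    ∑ z ∈ Finset.Icc (-N) N, (if h^2*(z:ℝ)^2 ≤ s^2 then c else 0)
      ≤ 2 * c * (s/h + 1) := by
  set f : ℤ → ℝ := fun z => (if h^2*(z:ℝ)^2 ≤ s^2 then c else 0) with hf
  have hf0 : ∀ z, 0 ≤ f z := by
    intro z; simp only [hf]; split_ifs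
    · exact hc
    · exact le_rfl
  have hev : ∀ z, f (-z) = f z := by
    intro z; simp only [hf]; push_cast; ring_nf
  set M : ℕ := ⌊s/h⌋₊ with hM
  have hvan : ∀ z : ℤ, (M:ℤ) < z → f z = 0 := by
    intro z hz; simp only [hf]
    rw [if_neg (vanish_above h s hh hs z hz)]
  have step1 := sum_even_reduce f hf0 hev N
  have step2 := sum_cap_range f hf0 M hvan N
  have hbd : ∑ j ∈ Finset.range (M+1), f j ≤ c * (M+1) := by
    calc ∑ j ∈ Finset.range (M+1), f j ≤ ∑ _j ∈ Finset.range (M+1), c := by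
          apply Finset.sum_le_sum
          intro j _
          simp only [hf]
          split_ifs
          · exact le_rfl
          · exact hc
      _ = c * (M+1) := by rw [Finset.sum_const, Finset.card_range]; push_cast; ring
  have hMb : (M:ℝ) ≤ s/h := Nat.floor_le (by positivity)
  calc ∑ z ∈ Finset.Icc (-N) N, f z ≤ 2 * ∑ z ∈ Finset.Icc 0 N, f z := step1
    _ ≤ 2 * ∑ j ∈ Finset.range (M+1), f j := by linarith
    _ ≤ 2 * (c * (M+1)) := by linarith
    _ ≤ 2 * c * (s/h + 1) := by nlinarith


set_option maxHeartbeats 1000000 in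
lemma inner_bound (h kF R g K : ℝ) (N : ℤ) (x y : ℤ)
    (hh0 : 0 < h) (hk0 : 0 < kF) (hR0 : 0 ≤ R) (hRk : R < kF)
    (hgdef : g = kF^2 - R^2)
    (hKdef : K = 2*kF/g + 1/h * Real.log (2*kF^2/g)) :
    ∑ z ∈ Finset.Icc (-N) N, (if h^2*((x:ℝ)^2+(y:ℝ)^2+(z:ℝ)^2) ≤ R^2 then
        1/(kF^2 - h^2*((x:ℝ)^2+(y:ℝ)^2+(z:ℝ)^2)) else 0)
      ≤ (if h^2*((x:ℝ)^2+(y:ℝ)^2) ≤ R^2 then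
        (2/Real.sqrt (kF^2 - h^2*((x:ℝ)^2+(y:ℝ)^2))) * K else 0) := by
  have hg0 : 0 < g := by rw [hgdef]; nlinarith
  by_cases hm : h^2*((x:ℝ)^2+(y:ℝ)^2) ≤ R^2
  · rw [if_pos hm]
    set m := h^2*((x:ℝ)^2+(y:ℝ)^2) with hmdef
    have hm0 : 0 ≤ m := by rw [hmdef]; positivity
    have hmk : m < kF^2 := by nlinarith
    set a := Real.sqrt (kF^2 - m) with hadef
    set s := Real.sqrt (R^2 - m) with hsdef
    have ha2 : a^2 = kF^2 - m := Real.sq_sqrt (by linarith)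
    have hs2 : s^2 = R^2 - m := Real.sq_sqrt (by linarith)
    have hs0 : 0 ≤ s := Real.sqrt_nonneg _
    have hsa : s < a := by
      rw [hadef, hsdef]
      apply Real.sqrt_lt_sqrt (by linarith) (by nlinarith)
    have ha0 : 0 < a := lt_of_le_of_lt hs0 hsa
    have hcongr : ∀ z ∈ Finset.Icc (-N) N,
        (if h^2*((x:ℝ)^2+(y:ℝ)^2+(z:ℝ)^2) ≤ R^2 then
          1/(kF^2 - h^2*((x:ℝ)^2+(y:ℝ)^2+(z:ℝ)^2)) else 0) =
        (if h^2*(z:ℝ)^2 ≤ s^2 then 1/(a^2 - h^2*(z:ℝ)^2) else 0) := by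
      intro z _
      have hexp : h^2*((x:ℝ)^2+(y:ℝ)^2+(z:ℝ)^2) = m + h^2*(z:ℝ)^2 := by
        rw [hmdef]; ring
      apply if_congr
      · rw [hexp, hs2]; constructor <;> intro <;> linarith
      · rw [hexp, ha2]; ring_nf
      · rfl
    rw [Finset.sum_congr rfl hcongr]
    have hlemA := lemA h a s hh0 hs0 hsa N
    have haK : 2/a * (1/(a-s) + 1/h * Real.log (a/(a-s))) ≤ 2/a * K := by
      apply mul_le_mul_of_nonneg_left _ (by positivity)
      have hak : a ≤ kF := by
        rw [hadef]
        calc Real.sqrt (kF^2 - m) ≤ Real.sqrt (kF^2) := Real.sqrt_le_sqrt (by linarith)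
          _ = kF := Real.sqrt_sq hk0.le
      have hgas : (a - s) * (a + s) = g := by rw [hgdef]; linear_combination ha2 - hs2
      have hasg : g/(2*kF) ≤ a - s := by
        rw [div_le_iff₀ (by positivity)]
        nlinarith
      have has0 : 0 < a - s := by linarith
      have h1 : 1/(a-s) ≤ 2*kF/g := by
        rw [div_le_div_iff₀ has0 hg0]
        nlinarith
      have h2 : a/(a-s) ≤ 2*kF^2/g := by
        have := mul_le_mul hak h1 (by positivity) hk0.le
        rw [div_eq_mul_one_div a (a-s)]
        calc a * (1/(a-s)) ≤ kF * (2*kF/g) := this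
          _ = 2*kF^2/g := by ring
      have h3 : Real.log (a/(a-s)) ≤ Real.log (2*kF^2/g) := by
        apply Real.log_le_log (by positivity) h2
      have h4 : 1/h * Real.log (a/(a-s)) ≤ 1/h * Real.log (2*kF^2/g) :=
        mul_le_mul_of_nonneg_left h3 (by positivity)
      rw [hKdef]
      linarith
    exact le_trans hlemA haK
  · rw [if_neg hm]
    apply le_of_eq
    apply Finset.sum_eq_zero
    intro z _
    rw [if_neg (by intro hcc; apply hm; nlinarith [sq_nonneg ((z:ℝ)), sq_nonneg h])]

set_option maxHeartbeats 1000000 in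
lemma middle_bound (h kF R g K c2 : ℝ) (N : ℤ) (x : ℤ)
    (hh0 : 0 < h) (hk0 : 0 < kF) (hk1 : kF ≤ 1) (hR0 : 0 ≤ R) (hRk : R < kF)
    (hgdef : g = kF^2 - R^2) (hg3 : kF^3 ≤ g) (hK0 : 0 ≤ K)
    (hc2def : c2 = 2*K*(4/kF^2 + 4/h)) :
    ∑ y ∈ Finset.Icc (-N) N, (if h^2*((x:ℝ)^2+(y:ℝ)^2) ≤ R^2 then
        (2/Real.sqrt (kF^2 - h^2*((x:ℝ)^2+(y:ℝ)^2))) * K else 0)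
      ≤ (if h^2*(x:ℝ)^2 ≤ R^2 then c2 else 0) := by
  have hg0 : 0 < g := by rw [hgdef]; nlinarith
  by_cases hx : h^2*(x:ℝ)^2 ≤ R^2
  · rw [if_pos hx]
    set m := h^2*(x:ℝ)^2 with hmdef
    have hm0 : 0 ≤ m := by rw [hmdef]; positivity
    have hmk : m < kF^2 := by nlinarith
    set a := Real.sqrt (kF^2 - m) with hadef
    set s := Real.sqrt (R^2 - m) with hsdef
    have ha2 : a^2 = kF^2 - m := Real.sq_sqrt (by linarith)
    have hs2 : s^2 = R^2 - m := Real.sq_sqrt (by linarith)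
    have hs0 : 0 ≤ s := Real.sqrt_nonneg _
    have hsa : s < a := by
      rw [hadef, hsdef]
      apply Real.sqrt_lt_sqrt (by linarith) (by nlinarith)
    have ha0 : 0 < a := lt_of_le_of_lt hs0 hsa
    have hcongr : ∀ y ∈ Finset.Icc (-N) N,
        (if h^2*((x:ℝ)^2+(y:ℝ)^2) ≤ R^2 then
          (2/Real.sqrt (kF^2 - h^2*((x:ℝ)^2+(y:ℝ)^2))) * K else 0)
        = 2*K * (if h^2*(y:ℝ)^2 ≤ s^2 then 1/Real.sqrt (a^2 - h^2*(y:ℝ)^2) else 0) := by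
      intro y _
      have hexp : h^2*((x:ℝ)^2+(y:ℝ)^2) = m + h^2*(y:ℝ)^2 := by
        rw [hmdef]; ring
      by_cases hcy : h^2*(y:ℝ)^2 ≤ s^2
      · rw [if_pos (by rw [hexp]; linarith [hcy, hs2]), if_pos hcy]
        rw [hexp]
        rw [show kF^2 - (m + h^2*(y:ℝ)^2) = a^2 - h^2*(y:ℝ)^2 by rw [ha2]; ring]
        ring
      · rw [if_neg (by rw [hexp]; intro hc; apply hcy; linarith [hs2]), if_neg hcy]
        ring
    rw [Finset.sum_congr rfl hcongr, ← Finset.mul_sum]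
    have hlemB := lemB h a s hh0 hs0 hsa N
    have hfin : 2*K * (2/(Real.sqrt a * Real.sqrt (a-s)) + 4/h) ≤ c2 := by
      rw [hc2def]
      have has0 : 0 < a - s := by linarith
      have hgas : (a - s) * (a + s) = g := by rw [hgdef]; linear_combination ha2 - hs2
      have haas : g/2 ≤ a * (a - s) := by nlinarith
      have hsqrt : Real.sqrt a * Real.sqrt (a-s) = Real.sqrt (a*(a-s)) :=
        (Real.sqrt_mul ha0.le _).symm
      have hg2 : (kF^2/2)^2 ≤ a*(a-s) := by
        nlinarith [pow_le_one₀ hk0.le hk1 (n := 1), sq_nonneg kF]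
      have hsq2 : kF^2/2 ≤ Real.sqrt (a*(a-s)) :=
        (Real.le_sqrt (by positivity) (by positivity)).mpr hg2
      have hmain : 2/(Real.sqrt a * Real.sqrt (a-s)) ≤ 4/kF^2 := by
        rw [hsqrt, div_le_div_iff₀ (by positivity) (by positivity)]
        have h2 : 0 < Real.sqrt (a*(a-s)) := by positivity
        nlinarith
      apply mul_le_mul_of_nonneg_left _ (by positivity)
      linarith
    calc 2*K * ∑ y ∈ Finset.Icc (-N) N,
          (if h^2*(y:ℝ)^2 ≤ s^2 then 1/Real.sqrt (a^2 - h^2*(y:ℝ)^2) else 0)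
        ≤ 2*K * (2/(Real.sqrt a * Real.sqrt (a-s)) + 4/h) := by
          apply mul_le_mul_of_nonneg_left hlemB (by positivity)
      _ ≤ c2 := hfin
  · rw [if_neg hx]
    apply le_of_eq
    apply Finset.sum_eq_zero
    intro y _
    rw [if_neg (by intro hcc; apply hx; nlinarith [sq_nonneg ((y:ℝ)), sq_nonneg h])]

set_option maxHeartbeats 2000000 in
theorem refined_interior_lattice_resolvent_sum_bound :
    ∀ δ : ℝ, δ ∈ Set.Ioc (0 : ℝ) (1 / 8) →
      ∃ C : ℝ, 0 < C ∧
        ∀ kF : ℝ, kF ∈ Set.Ioc (0 : ℝ) 1 →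
          ∃ L₀ : ℝ, 0 < L₀ ∧ ∀ L : ℝ, L₀ ≤ L →
            (1 / L ^ 3) *
                ∑' n : Fin 3 → ℤ,
                  (if knorm L n ≤ kF - kF ^ ((3 : ℝ) / 2) then
                    1 / (kF ^ 2 - knorm L n ^ 2)
                  else 0)
              ≤ C * kF ^ ((1 : ℝ) / 2 + 3 * δ) := by
  rintro δ ⟨hδ0, hδ8⟩
  refine ⟨100, by norm_num, ?_⟩
  rintro kF ⟨hk0, hk1⟩
  refine ⟨9 / kF^4, by positivity, ?_⟩
  intro L hL
  have hL0 : 0 < L := lt_of_lt_of_le (by positivity) hL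
  have hπ : (3:ℝ) < π := Real.pi_gt_three
  set t := kF ^ ((3:ℝ)/2) with ht
  have ht0 : 0 < t := Real.rpow_pos_of_pos hk0 _
  have htk : t ≤ kF := by
    have := Real.rpow_le_rpow_of_exponent_ge hk0 hk1 (by norm_num : (1:ℝ) ≤ 3/2)
    rwa [Real.rpow_one] at this
  have ht2 : kF^2 ≤ t := by
    have := Real.rpow_le_rpow_of_exponent_ge hk0 hk1 (by norm_num : (3:ℝ)/2 ≤ 2)
    rw [show ((2:ℝ) = ((2:ℕ):ℝ)) by norm_num, Real.rpow_natCast] at this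
    exact this
  set R := kF - t with hRdef
  have hR0 : 0 ≤ R := by rw [hRdef]; linarith
  have hRk : R < kF := by rw [hRdef]; linarith
  have hR1 : R ≤ 1 := by linarith
  set g := kF^2 - R^2 with hgdef
  have hg0 : 0 < g := by rw [hgdef]; nlinarith
  have hg3 : kF^3 ≤ g := by rw [hgdef, hRdef]; nlinarith
  have hgk2 : g ≤ kF^2 := by rw [hgdef]; nlinarith
  set h := 2*π/L with hhdef
  have hh0 : 0 < h := by rw [hhdef]; positivity
  have hinvh : 1/h = L/(2*π) := by rw [hhdef]; field_simp
  have hinvh6 : 1/h ≤ L/6 := by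
    rw [hinvh]
    apply div_le_div_of_nonneg_left hL0.le (by norm_num) (by linarith)
  -- bound 1/kF^2 ≤ L/9
  have hkL : 1/kF^2 ≤ L/9 := by
    rw [div_le_div_iff₀ (by positivity) (by norm_num)]
    have h9 : 9/kF^4 ≤ L := hL
    rw [div_le_iff₀ (by positivity)] at h9
    nlinarith [pow_pos hk0 2, pow_pos hk0 4, sq_nonneg kF]
  have honeL : 1 ≤ kF*L/9 := by
    have h9 : 9/kF^4 ≤ L := hL
    rw [div_le_iff₀ (by positivity)] at h9
    rw [le_div_iff₀ (by norm_num)]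
    nlinarith [pow_pos hk0 4, pow_le_one₀ hk0.le hk1 (n := 3)]
  set K := 2*kF/g + 1/h * Real.log (2*kF^2/g) with hKdef
  have hK0 : 0 ≤ K := by
    rw [hKdef]
    have h1 : (1:ℝ) ≤ 2*kF^2/g := by
      rw [le_div_iff₀ hg0]; linarith only [hgk2, sq_nonneg kF]
    have := Real.log_nonneg h1
    positivity
  set N : ℤ := (⌈L⌉₊ : ℤ) with hNdef
  set I := Finset.Icc (-N) N with hIdef
  set G : ℤ×ℤ×ℤ → ℝ := fun p =>
    if h^2*((p.1:ℝ)^2+(p.2.1:ℝ)^2+(p.2.2:ℝ)^2) ≤ R^2 then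
      1/(kF^2 - h^2*((p.1:ℝ)^2+(p.2.1:ℝ)^2+(p.2.2:ℝ)^2)) else 0 with hGdef
  -- the tsum equals a finite sum
  have hFG : ∀ p : ℤ×ℤ×ℤ,
      (if knorm L (e3 p) ≤ R then 1/(kF^2 - knorm L (e3 p)^2) else 0) = G p := by
    rintro ⟨x, y, z⟩
    have hsq : knorm L (e3 (x,y,z)) ^ 2 = h^2 * ((x:ℝ)^2+(y:ℝ)^2+(z:ℝ)^2) := by
      rw [knorm_sq_e3, hhdef]
    have hiff : knorm L (e3 (x,y,z)) ≤ R ↔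
        h^2*((x:ℝ)^2+(y:ℝ)^2+(z:ℝ)^2) ≤ R^2 := by
      rw [← hsq]
      exact (pow_le_pow_iff_left₀ (knorm_nonneg L _) hR0 two_ne_zero).symm
    simp only [hGdef]
    rw [if_congr hiff (by rw [hsq]) rfl]
  have hvanout : ∀ p : ℤ×ℤ×ℤ, p ∉ I ×ˢ (I ×ˢ I) → G p = 0 := by
    rintro ⟨x, y, z⟩ hp
    simp only [Finset.mem_product, hIdef, Finset.mem_Icc] at hp
    have hout : ∃ u : ℤ, (u = x ∨ u = y ∨ u = z) ∧ ((N:ℤ) + 1 ≤ u ∨ u ≤ -(N+1)) := by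
      by_contra hcon
      push_neg at hcon
      have h1 := hcon x (Or.inl rfl)
      have h2 := hcon y (Or.inr (Or.inl rfl))
      have h3 := hcon z (Or.inr (Or.inr rfl))
      omega
    obtain ⟨u, hu, hub⟩ := hout
    have hNL : L ≤ (N:ℝ) := by
      rw [hNdef]; push_cast; exact Nat.le_ceil L
    have huge : ((N:ℝ)+1)^2 ≤ (u:ℝ)^2 := by
      have : ((N:ℤ)+1)^2 ≤ u^2 := by
        rcases hub with h' | h' <;> nlinarith [sq_nonneg (u - N - 1), sq_nonneg (u + N + 1)]
      exact_mod_cast this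
    have hhL : h * L = 2*π := by rw [hhdef]; field_simp
    have hbig : R^2 < h^2 * (u:ℝ)^2 := by
      have h5 : h * L ≤ h * ((N:ℝ)+1) := by
        apply mul_le_mul_of_nonneg_left (by linarith) hh0.le
      have h6 : (2*π)^2 ≤ (h*((N:ℝ)+1))^2 := by
        rw [← hhL]; nlinarith [hh0.le, hL0.le]
      have h7 : (h*((N:ℝ)+1))^2 ≤ h^2 * (u:ℝ)^2 := by
        nlinarith [hh0.le, sq_nonneg h]
      nlinarith
    have hge : h^2*(u:ℝ)^2 ≤ h^2*((x:ℝ)^2+(y:ℝ)^2+(z:ℝ)^2) := by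
      rcases hu with h' | h' | h' <;> rw [h'] <;>
        nlinarith [sq_nonneg ((x:ℝ)), sq_nonneg ((y:ℝ)), sq_nonneg ((z:ℝ)), sq_nonneg h]
    simp only [hGdef]
    rw [if_neg (by nlinarith)]
  have htsum : (∑' n : Fin 3 → ℤ,
      (if knorm L n ≤ R then 1/(kF^2 - knorm L n^2) else 0))
      = ∑ x ∈ I, ∑ y ∈ I, ∑ z ∈ I, G (x, y, z) := by
    rw [← Equiv.tsum_eq e3 (fun n => if knorm L n ≤ R then 1/(kF^2 - knorm L n^2) else 0)]
    rw [tsum_congr hFG]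
    rw [tsum_eq_sum hvanout]
    rw [Finset.sum_product]
    apply Finset.sum_congr rfl
    intro x _
    rw [Finset.sum_product]
  set c2 : ℝ := 2*K*(4/kF^2 + 4/h) with hc2def
  have hc20 : 0 ≤ c2 := by rw [hc2def]; positivity
  have step4 : ∀ x y : ℤ, ∑ z ∈ I, G (x, y, z) ≤
      (if h^2*((x:ℝ)^2+(y:ℝ)^2) ≤ R^2 then
        (2/Real.sqrt (kF^2 - h^2*((x:ℝ)^2+(y:ℝ)^2))) * K else 0) := by
    intro x y
    have := inner_bound h kF R g K N x y hh0 hk0 hR0 hRk hgdef hKdef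
    simpa only [hGdef, hIdef] using this
  have step5 : ∀ x : ℤ, ∑ y ∈ I,
      (if h^2*((x:ℝ)^2+(y:ℝ)^2) ≤ R^2 then
        (2/Real.sqrt (kF^2 - h^2*((x:ℝ)^2+(y:ℝ)^2))) * K else 0)
      ≤ (if h^2*(x:ℝ)^2 ≤ R^2 then c2 else 0) := by
    intro x
    have := middle_bound h kF R g K c2 N x hh0 hk0 hk1 hR0 hRk hgdef hg3 hK0 hc2def
    simpa only [hIdef] using this
  have step6 := lemC h R c2 hh0 hR0 hc20 N
  have hxy : ∀ x : ℤ, ∑ y ∈ I, ∑ z ∈ I, G (x,y,z) ≤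
      (if h^2*(x:ℝ)^2 ≤ R^2 then c2 else 0) := by
    intro x
    exact le_trans (Finset.sum_le_sum (fun y _ => step4 x y)) (step5 x)
  have hT : ∑ x ∈ I, ∑ y ∈ I, ∑ z ∈ I, G (x,y,z) ≤ 2*c2*(R/h+1) := by
    refine le_trans (Finset.sum_le_sum (fun x _ => hxy x)) ?_
    rw [hIdef]
    exact step6
  rw [htsum]
  rw [hc2def] at hT
  clear hFG hvanout step4 step5 hxy step6 htsum hc20
  -- final numeric bounds
  set w := kF⁻¹ ^ ((1:ℝ)/8) with hw
  have hw1 : (1:ℝ) ≤ w := by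
    rw [hw]; exact Real.one_le_rpow (by rw [le_inv_comm₀] <;> simpa) (by norm_num)
  have hw0 : 0 < w := lt_of_lt_of_le one_pos hw1
  have hlogw : Real.log (kF⁻¹) ≤ 8 * w := by
    have h1 : Real.log w = (1/8) * Real.log kF⁻¹ := by rw [hw, Real.log_rpow (by positivity)]
    have h2 : Real.log w ≤ w - 1 := Real.log_le_sub_one_of_pos hw0
    linarith only [h1, h2, hw1]
  have hloggood : Real.log (2*kF^2/g) ≤ 1 + 8*w := by
    have h1 : 2*kF^2/g ≤ 2/kF := by
      rw [div_le_div_iff₀ hg0 hk0]; linarith only [hg3]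
    have h2 : Real.log (2*kF^2/g) ≤ Real.log (2/kF) := by
      apply Real.log_le_log _ h1
      positivity
    have h3 : Real.log (2/kF) = Real.log 2 + Real.log kF⁻¹ := by
      rw [div_eq_mul_inv, Real.log_mul (by norm_num) (by positivity)]
    have h4 : Real.log 2 ≤ 1 := by
      have := Real.log_le_sub_one_of_pos (show (0:ℝ) < 2 by norm_num); linarith only [this]
    linarith only [h2, h3, h4, hlogw]
  have hlog0 : 0 ≤ Real.log (2*kF^2/g) := by
    apply Real.log_nonneg
    rw [le_div_iff₀ hg0]; linarith only [hgk2, sq_nonneg kF]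
  have hKb : K ≤ 2*L*w := by
    rw [hKdef]
    have h1 : 2*kF/g ≤ 2/kF^2 := by
      rw [div_le_div_iff₀ hg0 (by positivity)]; linarith only [hg3]
    have h2 : 2/kF^2 ≤ 2*L/9 := by
      have : (2:ℝ) * (1/kF^2) ≤ 2 * (L/9) := by linarith only [hkL]
      calc 2/kF^2 = 2*(1/kF^2) := by ring
        _ ≤ 2*(L/9) := this
        _ = 2*L/9 := by ring
    have h3 : 1/h * Real.log (2*kF^2/g) ≤ (L/6) * (1 + 8*w) := by
      apply mul_le_mul hinvh6 hloggood hlog0 (by positivity)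
    have h4 : L ≤ L*w := by
      calc L = L*1 := (mul_one L).symm
        _ ≤ L*w := mul_le_mul_of_nonneg_left hw1 hL0.le
    linarith only [h3, h1, h2, h4, hL0.le]
  have hVb : 4/kF^2 + 4/h ≤ 2*L := by
    have h1 : 4/kF^2 = 4*(1/kF^2) := by ring
    have h2 : 4/h = 4*(1/h) := by ring
    linarith only [hkL, hinvh6, h1, h2, hL0.le]
  have hWb : R/h + 1 ≤ kF*L/3 := by
    have h1 : R/h = R*(1/h) := by ring
    have h2 : R*(1/h) ≤ kF*(L/6) := by
      apply mul_le_mul hRk.le hinvh6 (by positivity) hk0.le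
    linarith only [h1, h2, honeL, hL0.le, hk0.le]
  have hTB : ∑ x ∈ I, ∑ y ∈ I, ∑ z ∈ I, G (x,y,z) ≤ (16/3)*L^3*kF*w := by
    have hc2b : 2*K*(4/kF^2+4/h) ≤ 2*(2*L*w)*(2*L) := by
      have h0 : (0:ℝ) ≤ 4/kF^2 + 4/h := by positivity
      have := mul_le_mul (mul_le_mul_of_nonneg_left hKb (by norm_num : (0:ℝ) ≤ 2)) hVb h0
        (by positivity)
      linarith only [this]
    have hc2c : (0:ℝ) ≤ 2*K*(4/kF^2+4/h) := by positivity
    have hW0 : (0:ℝ) ≤ R/h + 1 := by positivity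
    calc ∑ x ∈ I, ∑ y ∈ I, ∑ z ∈ I, G (x,y,z)
        ≤ 2*(2*K*(4/kF^2 + 4/h))*(R/h+1) := hT
      _ ≤ 2*(2*(2*L*w)*(2*L))*(kF*L/3) := by
          apply mul_le_mul _ hWb hW0 (by positivity)
          linarith only [hc2b]
      _ = (16/3)*L^3*kF*w := by ring
  have hfinal : (1/L^3) * (∑ x ∈ I, ∑ y ∈ I, ∑ z ∈ I, G (x,y,z)) ≤ (16/3)*kF*w := by
    calc (1/L^3) * (∑ x ∈ I, ∑ y ∈ I, ∑ z ∈ I, G (x,y,z))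
        ≤ (1/L^3) * ((16/3)*L^3*kF*w) := by
          apply mul_le_mul_of_nonneg_left hTB (by positivity)
      _ = (16/3)*kF*w := by field_simp
  have hkw : kF * w = kF ^ ((7:ℝ)/8) := by
    rw [hw, Real.inv_rpow hk0.le, ← Real.rpow_neg hk0.le]
    rw [show kF * kF ^ (-((1:ℝ)/8)) = kF^(1:ℝ) * kF^(-((1:ℝ)/8)) by rw [Real.rpow_one]]
    rw [← Real.rpow_add hk0]
    norm_num
  have hexp : kF ^ ((7:ℝ)/8) ≤ kF ^ ((1:ℝ)/2 + 3*δ) :=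
    Real.rpow_le_rpow_of_exponent_ge hk0 hk1 (by linarith)
  have hpow0 : 0 ≤ kF ^ ((1:ℝ)/2 + 3*δ) := by positivity
  calc (1/L^3) * (∑ x ∈ I, ∑ y ∈ I, ∑ z ∈ I, G (x,y,z)) ≤ (16/3)*kF*w := hfinal
    _ = (16/3) * kF ^ ((7:ℝ)/8) := by rw [mul_assoc, hkw]
    _ ≤ (16/3) * kF ^ ((1:ℝ)/2 + 3*δ) := by linarith only [hexp]
    _ ≤ 100 * kF ^ ((1:ℝ)/2 + 3*δ) := by linarith only [hpow0]
end
end
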